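/- arXiv:1509.04736 — 2 statements merged into one kernel-verified Lean document; each statement's English description precedes it below -/
import Mathlib

section
/- In the quantum spatial ageing algebra A, the element X is a normal element: XA = AX. -/
/-- Generators of the quantum spatial ageing algebra. -/
inductive QGen : Type
  | E | K | Kinv | X | Y

open FreeAlgebra in
/-- Defining relations of the quantum spatial ageing algebra
`EK = q⁻²KE`, `XK = q⁻¹KX`, `YK = qKY`, `EX = qXE`, `EY = X + q⁻¹YE`, `qYX = XY`,
together with `K K⁻¹ = K⁻¹ K = 1`. -/
inductive QSARel (k : Type) [Field k] (q : k) :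
    FreeAlgebra k QGen → FreeAlgebra k QGen → Prop
  | KKinv : QSARel k q (ι k QGen.K * ι k QGen.Kinv) 1
  | KinvK : QSARel k q (ι k QGen.Kinv * ι k QGen.K) 1
  | EK : QSARel k q (ι k QGen.E * ι k QGen.K) ((q ^ 2)⁻¹ • (ι k QGen.K * ι k QGen.E))
  | XK : QSARel k q (ι k QGen.X * ι k QGen.K) (q⁻¹ • (ι k QGen.K * ι k QGen.X))
  | YK : QSARel k q (ι k QGen.Y * ι k QGen.K) (q • (ι k QGen.K * ι k QGen.Y))
  | EX : QSARel k q (ι k QGen.E * ι k QGen.X) (q • (ι k QGen.X * ι k QGen.E))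
  | EY : QSARel k q (ι k QGen.E * ι k QGen.Y)
      (ι k QGen.X + q⁻¹ • (ι k QGen.Y * ι k QGen.E))
  | YX : QSARel k q (q • (ι k QGen.Y * ι k QGen.X)) (ι k QGen.X * ι k QGen.Y)

/-- The quantum spatial ageing algebra `𝒜 = 𝕂_q[X,Y] ⋊ U_q^{≥0}(sl₂)`. -/
noncomputable abbrev QSA (k : Type) [Field k] (q : k) : Type := RingQuot (QSARel k q)

noncomputable def Egen (k : Type) [Field k] (q : k) : QSA k q :=
  RingQuot.mkAlgHom k (QSARel k q) (FreeAlgebra.ι k QGen.E)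
noncomputable def Kgen (k : Type) [Field k] (q : k) : QSA k q :=
  RingQuot.mkAlgHom k (QSARel k q) (FreeAlgebra.ι k QGen.K)
noncomputable def Kinvgen (k : Type) [Field k] (q : k) : QSA k q :=
  RingQuot.mkAlgHom k (QSARel k q) (FreeAlgebra.ι k QGen.Kinv)
noncomputable def Xgen (k : Type) [Field k] (q : k) : QSA k q :=
  RingQuot.mkAlgHom k (QSARel k q) (FreeAlgebra.ι k QGen.X)
noncomputable def Ygen (k : Type) [Field k] (q : k) : QSA k q :=
  RingQuot.mkAlgHom k (QSARel k q) (FreeAlgebra.ι k QGen.Y)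

/-- The normal element `φ = EY - qYE`. -/
noncomputable def phi (k : Type) [Field k] (q : k) : QSA k q :=
  Egen k q * Ygen k q - q • (Ygen k q * Egen k q)

section
variable (k : Type) [Field k] (q : k)

lemma qsa_rel {x y : FreeAlgebra k QGen} (h : QSARel k q x y) :
    RingQuot.mkAlgHom k (QSARel k q) x = RingQuot.mkAlgHom k (QSARel k q) y :=
  RingQuot.mkAlgHom_rel k h

lemma relKKinv : Kgen k q * Kinvgen k q = 1 := by
  simpa [Kgen, Kinvgen] using qsa_rel k q QSARel.KKinv
lemma relKinvK : Kinvgen k q * Kgen k q = 1 := by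
  simpa [Kgen, Kinvgen] using qsa_rel k q QSARel.KinvK
lemma relEK : Egen k q * Kgen k q = (q ^ 2)⁻¹ • (Kgen k q * Egen k q) := by
  simpa [Egen, Kgen] using qsa_rel k q QSARel.EK
lemma relXK : Xgen k q * Kgen k q = q⁻¹ • (Kgen k q * Xgen k q) := by
  simpa [Xgen, Kgen] using qsa_rel k q QSARel.XK
lemma relYK : Ygen k q * Kgen k q = q • (Kgen k q * Ygen k q) := by
  simpa [Ygen, Kgen] using qsa_rel k q QSARel.YK
lemma relEX : Egen k q * Xgen k q = q • (Xgen k q * Egen k q) := by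
  simpa [Egen, Xgen] using qsa_rel k q QSARel.EX
lemma relEY : Egen k q * Ygen k q = Xgen k q + q⁻¹ • (Ygen k q * Egen k q) := by
  simpa [Egen, Ygen, Xgen] using qsa_rel k q QSARel.EY
lemma relYX : q • (Ygen k q * Xgen k q) = Xgen k q * Ygen k q := by
  simpa [Ygen, Xgen] using qsa_rel k q QSARel.YX

end

section
variable (k : Type) [Field k] (q : k)

/-- generator images for the left twist: `X * g = (fsig g) * X`. -/
noncomputable def fsig : QGen → QSA k q
  | .E => q⁻¹ • Egen k q
  | .K => q⁻¹ • Kgen k q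
  | .Kinv => q • Kinvgen k q
  | .X => Xgen k q
  | .Y => q • Ygen k q

/-- generator images for the right twist: `g * X = X * (ftau g)`. -/
noncomputable def ftau : QGen → QSA k q
  | .E => q • Egen k q
  | .K => q • Kgen k q
  | .Kinv => q⁻¹ • Kinvgen k q
  | .X => Xgen k q
  | .Y => q⁻¹ • Ygen k q

variable (hq : q ≠ 0)
include hq

lemma fsig_rel : ∀ ⦃x y : FreeAlgebra k QGen⦄, QSARel k q x y →
    FreeAlgebra.lift k (fsig k q) x = FreeAlgebra.lift k (fsig k q) y := by
  intro x y h
  induction h <;>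
    simp only [map_mul, map_add, map_smul, map_one, FreeAlgebra.lift_ι_apply, fsig,
      smul_mul_assoc, mul_smul_comm, smul_smul, relKKinv, relKinvK, relEK k q, relXK k q,
      relYK k q, relEX k q, relEY k q, ← relYX k q, smul_add]
  all_goals simp [smul_smul, inv_mul_cancel₀ hq, mul_inv_cancel₀ hq,
    mul_comm, mul_left_comm, mul_assoc]
  all_goals (congr 1; field_simp)

lemma ftau_rel : ∀ ⦃x y : FreeAlgebra k QGen⦄, QSARel k q x y →
    FreeAlgebra.lift k (ftau k q) x = FreeAlgebra.lift k (ftau k q) y := by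
  intro x y h
  induction h <;>
    simp only [map_mul, map_add, map_smul, map_one, FreeAlgebra.lift_ι_apply, ftau,
      smul_mul_assoc, mul_smul_comm, smul_smul, relKKinv, relKinvK, relEK k q, relXK k q,
      relYK k q, relEX k q, relEY k q, ← relYX k q, smul_add]
  all_goals simp [smul_smul, inv_mul_cancel₀ hq, mul_inv_cancel₀ hq,
    mul_comm, mul_left_comm, mul_assoc]
  all_goals (congr 1; field_simp)

noncomputable def sig : QSA k q →ₐ[k] QSA k q :=
  RingQuot.liftAlgHom k ⟨FreeAlgebra.lift k (fsig k q), fsig_rel k q hq⟩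

noncomputable def tau : QSA k q →ₐ[k] QSA k q :=
  RingQuot.liftAlgHom k ⟨FreeAlgebra.lift k (ftau k q), ftau_rel k q hq⟩

end

section
variable (k : Type) [Field k] (q : k) (hq : q ≠ 0)
include hq

lemma Xgen_comm_E : Xgen k q * Egen k q = q⁻¹ • (Egen k q * Xgen k q) := by
  rw [relEX k q, smul_smul, inv_mul_cancel₀ hq, one_smul]
lemma Xgen_comm_K : Xgen k q * Kinvgen k q = q • (Kinvgen k q * Xgen k q) := by
  have h := congrArg (fun z => Kinvgen k q * z * Kinvgen k q) (relXK k q)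
  simp only [mul_smul_comm, smul_mul_assoc, mul_assoc] at h
  rw [relKKinv k q, mul_one, ← mul_assoc, relKinvK k q, one_mul] at h
  rw [h, smul_smul, mul_inv_cancel₀ hq, one_smul]
omit hq in
lemma Xgen_comm_Y : Xgen k q * Ygen k q = q • (Ygen k q * Xgen k q) :=
  (relYX k q).symm

lemma sig_comm (a : QSA k q) : Xgen k q * a = sig k q hq a * Xgen k q := by
  obtain ⟨x, rfl⟩ := RingQuot.mkAlgHom_surjective k (QSARel k q) a
  induction x using FreeAlgebra.induction with
  | grade0 r =>
      rw [AlgHom.commutes, AlgHom.commutes, Algebra.commutes]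
  | grade1 g =>
      have hsig : ∀ g : QGen, sig k q hq (RingQuot.mkAlgHom k (QSARel k q)
          (FreeAlgebra.ι k g)) = fsig k q g := by
        intro g
        simp [sig, RingQuot.liftAlgHom_mkAlgHom_apply]
      rw [hsig]
      cases g
      · simpa [fsig, smul_mul_assoc, Xgen, Egen] using Xgen_comm_E k q hq
      · simpa [fsig, smul_mul_assoc, Xgen, Kgen] using relXK k q
      · simpa [fsig, smul_mul_assoc, Xgen, Kinvgen] using Xgen_comm_K k q hq
      · rfl
      · simpa [fsig, smul_mul_assoc, Xgen, Ygen] using Xgen_comm_Y k q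
  | mul x y hx hy =>
      rw [map_mul, map_mul, ← mul_assoc, hx, mul_assoc, hy, ← mul_assoc]
  | add x y hx hy =>
      rw [map_add, map_add, mul_add, hx, hy, add_mul]

lemma tau_comm (a : QSA k q) : a * Xgen k q = Xgen k q * tau k q hq a := by
  obtain ⟨x, rfl⟩ := RingQuot.mkAlgHom_surjective k (QSARel k q) a
  induction x using FreeAlgebra.induction with
  | grade0 r =>
      rw [AlgHom.commutes, AlgHom.commutes, Algebra.commutes]
  | grade1 g =>
      have htau : ∀ g : QGen, tau k q hq (RingQuot.mkAlgHom k (QSARel k q)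
          (FreeAlgebra.ι k g)) = ftau k q g := by
        intro g
        simp [tau, RingQuot.liftAlgHom_mkAlgHom_apply]
      rw [htau]
      cases g
      · simpa [ftau, mul_smul_comm, Egen, Xgen] using relEX k q
      · show Kgen k q * Xgen k q = Xgen k q * (q • Kgen k q)
        rw [mul_smul_comm, relXK k q, smul_smul, mul_inv_cancel₀ hq, one_smul]
      · show Kinvgen k q * Xgen k q = Xgen k q * (q⁻¹ • Kinvgen k q)
        rw [mul_smul_comm, Xgen_comm_K k q hq, smul_smul, inv_mul_cancel₀ hq, one_smul]
      · rfl
      · show Ygen k q * Xgen k q = Xgen k q * (q⁻¹ • Ygen k q)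
        rw [mul_smul_comm, ← relYX k q, smul_smul, inv_mul_cancel₀ hq, one_smul]
  | mul x y hx hy =>
      rw [map_mul, map_mul, mul_assoc, hy, ← mul_assoc, hx, mul_assoc]
  | add x y hx hy =>
      rw [map_add, map_add, add_mul, hx, hy, mul_add]

end

/-- `X` is a normal element of `𝒜`: `X𝒜 = 𝒜X`. -/
theorem stmt5 (k : Type) [Field k] (q : k) (hq : q ≠ 0)
    (hq' : ∀ n : ℕ, n ≠ 0 → q ^ n ≠ 1) :
    Set.range (fun a : QSA k q => Xgen k q * a) =
      Set.range (fun a : QSA k q => a * Xgen k q) := by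
  ext z
  constructor
  · rintro ⟨a, rfl⟩
    exact ⟨sig k q hq a, (sig_comm k q hq a).symm⟩
  · rintro ⟨a, rfl⟩
    exact ⟨tau k q hq a, (tau_comm k q hq a).symm⟩
end

section
/- The element Z := φYK^{-1}, with φ = EY − qYE, is central in the quotient algebra A/(X), and Z ≡ (1−q^2)EY^2K^{-1} mod (X). -/
-- shifting helpers on QSA
lemma shift1 {k : Type} [Field k] {q : k} {a b c : QSA k q} {s : k}
    (h : a * b = s • c) (z : QSA k q) : a * (b * z) = s • (c * z) := by
  rw [← mul_assoc, h, smul_mul_assoc]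

lemma shift0 {k : Type} [Field k] {q : k} {a b : QSA k q} (h : a * b = 1) (z : QSA k q) :
    a * (b * z) = z := by
  rw [← mul_assoc, h, one_mul]

lemma shift2 {k : Type} [Field k] {q : k} {a b c d : QSA k q} {s t : k}
    (h : a * b = s • c - t • d) (z : QSA k q) :
    a * (b * z) = s • (c * z) - t • (d * z) := by
  rw [← mul_assoc, h, sub_mul, smul_mul_assoc, smul_mul_assoc]

section Aux
variable (k : Type) [Field k] (q : k)

local notation "E" => Egen k q
local notation "K" => Kgen k q
local notation "Ki" => Kinvgen k q
local notation "Xg" => Xgen k q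
local notation "Y" => Ygen k q

lemma hKKi : K * Ki = 1 := by
  simpa [Kgen, Kinvgen, map_mul, map_one] using
    RingQuot.mkAlgHom_rel k (QSARel.KKinv (k := k) (q := q))

lemma hKiK : Ki * K = 1 := by
  simpa [Kgen, Kinvgen, map_mul, map_one] using
    RingQuot.mkAlgHom_rel k (QSARel.KinvK (k := k) (q := q))

lemma hEK : E * K = (q ^ 2)⁻¹ • (K * E) := by
  simpa [Egen, Kgen, map_mul, map_smul] using
    RingQuot.mkAlgHom_rel k (QSARel.EK (k := k) (q := q))

lemma hXK : Xg * K = q⁻¹ • (K * Xg) := by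
  simpa [Xgen, Kgen, map_mul, map_smul] using
    RingQuot.mkAlgHom_rel k (QSARel.XK (k := k) (q := q))

lemma hYK : Y * K = q • (K * Y) := by
  simpa [Ygen, Kgen, map_mul, map_smul] using
    RingQuot.mkAlgHom_rel k (QSARel.YK (k := k) (q := q))

lemma hEX : E * Xg = q • (Xg * E) := by
  simpa [Egen, Xgen, map_mul, map_smul] using
    RingQuot.mkAlgHom_rel k (QSARel.EX (k := k) (q := q))

lemma hEY : E * Y = Xg + q⁻¹ • (Y * E) := by
  simpa [Egen, Xgen, Ygen, map_mul, map_add, map_smul] using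
    RingQuot.mkAlgHom_rel k (QSARel.EY (k := k) (q := q))

lemma hYX0 : q • (Y * Xg) = Xg * Y := by
  simpa [Ygen, Xgen, map_mul, map_smul] using
    RingQuot.mkAlgHom_rel k (QSARel.YX (k := k) (q := q))



variable {k q}
variable (hq : q ≠ 0)
include hq

lemma hKY : K * Y = q⁻¹ • (Y * K) := by
  rw [hYK, smul_smul, inv_mul_cancel₀ hq, one_smul]

lemma hKE : K * E = q ^ 2 • (E * K) := by
  rw [hEK, smul_smul, mul_inv_cancel₀ (pow_ne_zero 2 hq), one_smul]

lemma hKX : K * Xg = q • (Xg * K) := by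
  rw [hXK, smul_smul, mul_inv_cancel₀ hq, one_smul]

lemma hYE : Y * E = q • (E * Y) - q • Xg := by
  rw [hEY, smul_add, smul_smul, mul_inv_cancel₀ hq, one_smul, add_sub_cancel_left]

lemma hYX : Y * Xg = q⁻¹ • (Xg * Y) := by
  rw [← hYX0, smul_smul, inv_mul_cancel₀ hq, one_smul]

omit hq

lemma hKiY : Ki * Y = q • (Y * Ki) := by
  have h1 : Ki * (Y * K) * Ki = Ki * Y := by
    rw [mul_assoc (Kinvgen k q) (Ygen k q * Kgen k q), mul_assoc, hKKi, mul_one]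
  rw [← h1, hYK]
  rw [mul_smul_comm, smul_mul_assoc, ← mul_assoc, hKiK, one_mul]

lemma hKiE : Ki * E = (q ^ 2)⁻¹ • (E * Ki) := by
  have h1 : Ki * (E * K) * Ki = Ki * E := by
    rw [mul_assoc (Kinvgen k q) (Egen k q * Kgen k q), mul_assoc, hKKi, mul_one]
  rw [← h1, hEK]
  rw [mul_smul_comm, smul_mul_assoc, ← mul_assoc, hKiK, one_mul]

lemma hKiX : Ki * Xg = q⁻¹ • (Xg * Ki) := by
  have h1 : Ki * (Xg * K) * Ki = Ki * Xg := by
    rw [mul_assoc (Kinvgen k q) (Xgen k q * Kgen k q), mul_assoc, hKKi, mul_one]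
  rw [← h1, hXK]
  rw [mul_smul_comm, smul_mul_assoc, ← mul_assoc, hKiK, one_mul]


section Comms
variable (hq : q ≠ 0)
include hq

-- commutation of V = E Y² K⁻¹ with the generators, as exact identities
lemma commK : (E * Y ^ 2 * Ki) * K = K * (E * Y ^ 2 * Ki) := by
  simp only [pow_two, mul_assoc, hKY hq, shift1 (hKY hq), hKE hq, shift1 (hKE hq),
    hKX hq, shift1 (hKX hq), hKiY, shift1 (hKiY), hKiE, shift1 (hKiE),
    hKiX, shift1 (hKiX), hKKi, shift0 (hKKi k q), hKiK, shift0 (hKiK k q),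
    hYE hq, shift2 (hYE hq), hEX, shift1 (hEX k q), hYX hq, shift1 (hYX hq),
    mul_add, add_mul, mul_sub, sub_mul, smul_add, smul_sub, smul_mul_assoc,
    mul_smul_comm, smul_smul, one_mul, mul_one]
  match_scalars
  all_goals field_simp

lemma commKi : (E * Y ^ 2 * Ki) * Ki = Ki * (E * Y ^ 2 * Ki) := by
  simp only [pow_two, mul_assoc, hKY hq, shift1 (hKY hq), hKE hq, shift1 (hKE hq),
    hKX hq, shift1 (hKX hq), hKiY, shift1 (hKiY), hKiE, shift1 (hKiE),
    hKiX, shift1 (hKiX), hKKi, shift0 (hKKi k q), hKiK, shift0 (hKiK k q),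
    hYE hq, shift2 (hYE hq), hEX, shift1 (hEX k q), hYX hq, shift1 (hYX hq),
    mul_add, add_mul, mul_sub, sub_mul, smul_add, smul_sub, smul_mul_assoc,
    mul_smul_comm, smul_smul, one_mul, mul_one]
  match_scalars
  all_goals field_simp

lemma commY : (E * Y ^ 2 * Ki) * Y - Y * (E * Y ^ 2 * Ki) = q • (Xg * (Y * (Y * Ki))) := by
  simp only [pow_two, mul_assoc, hKY hq, shift1 (hKY hq), hKE hq, shift1 (hKE hq),
    hKX hq, shift1 (hKX hq), hKiY, shift1 (hKiY), hKiE, shift1 (hKiE),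
    hKiX, shift1 (hKiX), hKKi, shift0 (hKKi k q), hKiK, shift0 (hKiK k q),
    hYE hq, shift2 (hYE hq), hEX, shift1 (hEX k q), hYX hq, shift1 (hYX hq),
    mul_add, add_mul, mul_sub, sub_mul, smul_add, smul_sub, smul_mul_assoc,
    mul_smul_comm, smul_smul, one_mul, mul_one]
  match_scalars
  all_goals field_simp
  all_goals ring

lemma commE : (E * Y ^ 2 * Ki) * E - E * (E * Y ^ 2 * Ki) =
    (-q - q⁻¹) • (Xg * (E * (Y * Ki))) := by
  simp only [pow_two, mul_assoc, hKY hq, shift1 (hKY hq), hKE hq, shift1 (hKE hq),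
    hKX hq, shift1 (hKX hq), hKiY, shift1 (hKiY), hKiE, shift1 (hKiE),
    hKiX, shift1 (hKiX), hKKi, shift0 (hKKi k q), hKiK, shift0 (hKiK k q),
    hYE hq, shift2 (hYE hq), hEX, shift1 (hEX k q), hYX hq, shift1 (hYX hq),
    mul_add, add_mul, mul_sub, sub_mul, smul_add, smul_sub, smul_mul_assoc,
    mul_smul_comm, smul_smul, one_mul, mul_one]
  match_scalars
  all_goals field_simp
  all_goals ring

lemma Zeq : (E * Y - q • (Y * E)) * Y * Ki - (1 - q ^ 2) • (E * Y ^ 2 * Ki) =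
    q ^ 2 • (Xg * (Y * Ki)) := by
  simp only [pow_two, mul_assoc, hKY hq, shift1 (hKY hq), hKE hq, shift1 (hKE hq),
    hKX hq, shift1 (hKX hq), hKiY, shift1 (hKiY), hKiE, shift1 (hKiE),
    hKiX, shift1 (hKiX), hKKi, shift0 (hKKi k q), hKiK, shift0 (hKiK k q),
    hYE hq, shift2 (hYE hq), hEX, shift1 (hEX k q), hYX hq, shift1 (hYX hq),
    mul_add, add_mul, mul_sub, sub_mul, smul_add, smul_sub, smul_mul_assoc,
    mul_smul_comm, smul_smul, one_mul, mul_one]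
  match_scalars
  all_goals field_simp
  all_goals ring

end Comms
end Aux


/-- `Z = φYK⁻¹` is central in `𝒜/(X)` and
`Z ≡ (1−q²)EY²K⁻¹ mod (X)`. -/
theorem stmt9 (k : Type) [Field k] (q : k) (hq : q ≠ 0)
    (hq' : ∀ n : ℕ, n ≠ 0 → q ^ n ≠ 1) :
    (∀ a : QSA k q,
        (phi k q * Ygen k q * Kinvgen k q) * a - a * (phi k q * Ygen k q * Kinvgen k q) ∈
          TwoSidedIdeal.span {Xgen k q}) ∧
    phi k q * Ygen k q * Kinvgen k q -
        (1 - q ^ 2) • (Egen k q * Ygen k q ^ 2 * Kinvgen k q) ∈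
      TwoSidedIdeal.span {Xgen k q} := by
  set I := TwoSidedIdeal.span {Xgen k q} with hI
  have hX : Xgen k q ∈ I := TwoSidedIdeal.subset_span (Set.mem_singleton _)
  have smem : ∀ (s : k) {x : QSA k q}, x ∈ I → s • x ∈ I := by
    intro s x hx
    rw [Algebra.smul_def]
    exact I.mul_mem_left _ _ hx
  have hZV : phi k q * Ygen k q * Kinvgen k q -
      (1 - q ^ 2) • (Egen k q * Ygen k q ^ 2 * Kinvgen k q) ∈ I := by
    simp only [phi]
    rw [Zeq hq]
    exact smem _ (I.mul_mem_right _ _ hX)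
  refine ⟨?_, hZV⟩
  have hV : ∀ a : QSA k q, (Egen k q * Ygen k q ^ 2 * Kinvgen k q) * a
      - a * (Egen k q * Ygen k q ^ 2 * Kinvgen k q) ∈ I := by
    intro a
    obtain ⟨b, rfl⟩ := RingQuot.mkAlgHom_surjective k (QSARel k q) a
    induction b using FreeAlgebra.induction with
    | grade0 r =>
        rw [AlgHom.commutes, Algebra.commutes, sub_self]
        exact I.zero_mem
    | grade1 g =>
        cases g with
        | E =>
            show (Egen k q * Ygen k q ^ 2 * Kinvgen k q) * Egen k q
              - Egen k q * (Egen k q * Ygen k q ^ 2 * Kinvgen k q) ∈ I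
            rw [commE hq]
            exact smem _ (I.mul_mem_right _ _ hX)
        | K =>
            show (Egen k q * Ygen k q ^ 2 * Kinvgen k q) * Kgen k q
              - Kgen k q * (Egen k q * Ygen k q ^ 2 * Kinvgen k q) ∈ I
            rw [commK hq, sub_self]
            exact I.zero_mem
        | Kinv =>
            show (Egen k q * Ygen k q ^ 2 * Kinvgen k q) * Kinvgen k q
              - Kinvgen k q * (Egen k q * Ygen k q ^ 2 * Kinvgen k q) ∈ I
            rw [commKi hq, sub_self]
            exact I.zero_mem
        | X =>
            show (Egen k q * Ygen k q ^ 2 * Kinvgen k q) * Xgen k q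
              - Xgen k q * (Egen k q * Ygen k q ^ 2 * Kinvgen k q) ∈ I
            exact I.sub_mem (I.mul_mem_left _ _ hX) (I.mul_mem_right _ _ hX)
        | Y =>
            show (Egen k q * Ygen k q ^ 2 * Kinvgen k q) * Ygen k q
              - Ygen k q * (Egen k q * Ygen k q ^ 2 * Kinvgen k q) ∈ I
            rw [commY hq]
            exact smem _ (I.mul_mem_right _ _ hX)
    | mul x y hx hy =>
        rw [map_mul]
        set V := Egen k q * Ygen k q ^ 2 * Kinvgen k q
        set fx := RingQuot.mkAlgHom k (QSARel k q) x
        set fy := RingQuot.mkAlgHom k (QSARel k q) y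
        have hkey : V * (fx * fy) - fx * fy * V
            = (V * fx - fx * V) * fy + fx * (V * fy - fy * V) := by
          simp only [sub_mul, mul_sub, mul_add, add_mul, mul_assoc]; abel
        rw [hkey]
        exact I.add_mem (I.mul_mem_right _ _ hx) (I.mul_mem_left _ _ hy)
    | add x y hx hy =>
        rw [map_add]
        set V := Egen k q * Ygen k q ^ 2 * Kinvgen k q
        set fx := RingQuot.mkAlgHom k (QSARel k q) x
        set fy := RingQuot.mkAlgHom k (QSARel k q) y
        have hkey : V * (fx + fy) - (fx + fy) * V
            = (V * fx - fx * V) + (V * fy - fy * V) := by noncomm_ring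
        rw [hkey]
        exact I.add_mem hx hy
  intro a
  set V := Egen k q * Ygen k q ^ 2 * Kinvgen k q with hVdef
  set Z := phi k q * Ygen k q * Kinvgen k q with hZdef
  have hkey : Z * a - a * Z
      = ((Z - (1 - q ^ 2) • V) * a - a * (Z - (1 - q ^ 2) • V))
        + (1 - q ^ 2) • (V * a - a * V) := by
    simp only [sub_mul, mul_sub, smul_sub, smul_mul_assoc, mul_smul_comm]
    abel
  rw [hkey]
  exact I.add_mem
    (I.sub_mem (I.mul_mem_right _ _ hZV) (I.mul_mem_left _ _ hZV)) (smem _ (hV a))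
end
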